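/- Let A be a nonnegative selfadjoint operator on a complex Hilbert space X with 0 ∈ σ(A) but 0 not an eigenvalue of A. Then for every α > 0, an element x ∈ X belongs to the range R(A^α) of the fractional power A^α if and only if the integral ∫₀^∞ t^{2α-1} ‖e^{-tA} x‖² dt is finite. -/

import Mathlib

/-!
By the spectral theorem, every nonnegative selfadjoint operator `A` on a complex
Hilbert space `X` with `0 ∈ σ(A) \ σ_p(A)` is unitarily equivalent to the operator of
multiplication by a measurable function `a ≥ 0` (with `a > 0` a.e. and
`essinf a = 0`) on some `L²(μ)`.  We formalize the statement in this spectral model: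
`X = L²(μ)`, `(e^{-tA}x)(i) = exp(-t a i) x i`, `(A^α y)(i) = (a i)^α y i`, and
`x ∈ R(A^α)` iff `x = A^α y` for some `y ∈ L²(μ)`.
-/

open MeasureTheory Filter
open scoped ENNReal NNReal

/-- `‖e^{-tA} x‖²` in the spectral model. -/
noncomputable def heatNormSq {ι : Type*} [MeasurableSpace ι] (μ : Measure ι)
    (a : ι → ℝ) (x : ι → ℂ) (t : ℝ) : ℝ≥0∞ :=
  ∫⁻ i, (‖x i‖₊ : ℝ≥0∞) ^ 2 * ENNReal.ofReal (Real.exp (-(2 * t * a i))) ∂μ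

/-- `∫₀^∞ t^{2α-1} ‖e^{-tA} x‖² dt` in the spectral model. -/
noncomputable def rangeIntegral {ι : Type*} [MeasurableSpace ι] (μ : Measure ι)
    (a : ι → ℝ) (α : ℝ) (x : ι → ℂ) : ℝ≥0∞ :=
  ∫⁻ t in Set.Ioi (0 : ℝ), ENNReal.ofReal (t ^ (2 * α - 1)) * heatNormSq μ a x t

/-- Membership in `L²` in terms of the lintegral of the squared norm. -/
lemma memLp_two_iff_lintegral {ι : Type*} [MeasurableSpace ι] {μ : Measure ι}
    {f : ι → ℂ} (hf : AEStronglyMeasurable f μ) :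
    MemLp f 2 μ ↔ ∫⁻ i, (‖f i‖₊ : ℝ≥0∞) ^ 2 ∂μ < ⊤ := by
  have h2 : ((2 : ℝ≥0∞)).toReal = 2 := by norm_num
  rw [MemLp, eLpNorm_eq_lintegral_rpow_enorm_toReal (by norm_num) (by norm_num), h2]
  have hrw : ∀ i, (‖f i‖₊ : ℝ≥0∞) ^ (2 : ℝ) = (‖f i‖₊ : ℝ≥0∞) ^ (2 : ℕ) := fun i => by
    rw [show (2 : ℝ) = ((2 : ℕ) : ℝ) by norm_num, ENNReal.rpow_natCast]
  simp only [enorm_eq_nnnorm, hrw]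
  constructor
  · rintro ⟨-, h⟩
    rwa [ENNReal.rpow_lt_top_iff_of_pos (by norm_num)] at h
  · intro h
    exact ⟨hf, by rwa [ENNReal.rpow_lt_top_iff_of_pos (by norm_num)]⟩

/-- The Gamma-integral computation, in `ℝ≥0∞`. -/
lemma lintegral_heat_kernel {α r : ℝ} (hα : 0 < α) (hr : 0 < r) :
    ∫⁻ t in Set.Ioi (0 : ℝ),
        ENNReal.ofReal (t ^ (2 * α - 1)) * ENNReal.ofReal (Real.exp (-(2 * t * r)))
      = ENNReal.ofReal ((1 / (2 * r)) ^ (2 * α) * Real.Gamma (2 * α)) := by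
  have h2α : 0 < 2 * α := by linarith
  have h2r : 0 < 2 * r := by linarith
  have hint := Real.integral_rpow_mul_exp_neg_mul_Ioi h2α h2r
  have hIpos : 0 < (1 / (2 * r)) ^ (2 * α) * Real.Gamma (2 * α) := by positivity
  have hInt : IntegrableOn (fun t : ℝ => t ^ (2 * α - 1) * Real.exp (-(2 * r * t)))
      (Set.Ioi (0 : ℝ)) := by
    by_contra h
    rw [MeasureTheory.integral_undef h] at hint
    linarith
  have hnn : 0 ≤ᵐ[volume.restrict (Set.Ioi (0 : ℝ))]
      fun t : ℝ => t ^ (2 * α - 1) * Real.exp (-(2 * r * t)) := by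
    refine (ae_restrict_iff' measurableSet_Ioi).2 (ae_of_all _ fun t ht => ?_)
    have ht' : (0 : ℝ) < t := ht
    positivity
  rw [← hint, ofReal_integral_eq_lintegral_ofReal hInt hnn]
  refine (setLIntegral_congr_fun measurableSet_Ioi (fun t ht => ?_)).symm
  have ht' : (0 : ℝ) < t := ht
  rw [ENNReal.ofReal_mul (by positivity)]
  ring_nf

theorem stmt0_measurable {ι : Type*} [MeasurableSpace ι] (μ : Measure ι)
    (a : ι → ℝ) (hameas : Measurable a) (ha0 : ∀ i, 0 ≤ a i)
    (hker : ∀ᵐ i ∂μ, a i ≠ 0)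
    (α : ℝ) (hα : 0 < α) (x : ι → ℂ) (hxm : Measurable x)
    (hx2 : ∫⁻ i, (‖x i‖₊ : ℝ≥0∞) ^ 2 ∂μ < ⊤) :
    (∃ y : ι → ℂ, MemLp y 2 μ ∧ x =ᵐ[μ] fun i => ((a i ^ α : ℝ) : ℂ) * y i)
      ↔ rangeIntegral μ a α x < ⊤ := by
  classical
  set K : ℝ≥0∞ := ENNReal.ofReal ((1 / 2) ^ (2 * α) * Real.Gamma (2 * α)) with hK
  have hKpos : 0 < (1 / 2 : ℝ) ^ (2 * α) * Real.Gamma (2 * α) := by positivity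
  have hK0 : K ≠ 0 := by
    rw [hK]
    simp only [ne_eq, ENNReal.ofReal_eq_zero, not_le]
    exact hKpos
  have hKtop : K ≠ ⊤ := ENNReal.ofReal_ne_top
  -- squared norm as ofReal
  have enorm_sq : ∀ z : ℂ, (‖z‖₊ : ℝ≥0∞) ^ 2 = ENNReal.ofReal (‖z‖ ^ 2) := fun z => by
    rw [ENNReal.ofReal_pow (norm_nonneg z), ofReal_norm, enorm_eq_nnnorm]
  -- the constant value of the heat kernel integral
  have hC : ∀ r : ℝ, 0 < r →
      ENNReal.ofReal ((1 / (2 * r)) ^ (2 * α) * Real.Gamma (2 * α))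
        = K * ENNReal.ofReal (r ^ (-(2 * α))) := by
    intro r hr
    rw [hK, ← ENNReal.ofReal_mul hKpos.le]
    congr 1
    have h1 : (1 / (2 * r) : ℝ) ^ (2 * α) = (1 / 2 : ℝ) ^ (2 * α) * r ^ (-(2 * α)) := by
      rw [show (1 / (2 * r) : ℝ) = (1 / 2) * r⁻¹ by field_simp,
        Real.mul_rpow (by norm_num) (by positivity), Real.inv_rpow hr.le,
        ← Real.rpow_neg hr.le]
    rw [h1]; ring
  -- sigma-finite restriction to the support of `x`
  set S : Set ι := {i | x i ≠ 0} with hSdef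
  have hS : MeasurableSet S := by
    have : S = (x ⁻¹' {0})ᶜ := by ext i; simp [hSdef]
    rw [this]
    exact (hxm (measurableSet_singleton 0)).compl
  set ν : Measure ι := μ.restrict S with hν
  have hxmeas2 : Measurable fun i => (‖x i‖₊ : ℝ≥0∞) ^ 2 :=
    (hxm.nnnorm.coe_nnreal_ennreal).pow_const 2
  have hAfin : ∀ n : ℕ, μ {i | ((n : ℝ≥0∞) + 1)⁻¹ ≤ (‖x i‖₊ : ℝ≥0∞) ^ 2} < ⊤ := by
    intro n
    have h := mul_meas_ge_le_lintegral₀ (μ := μ) hxmeas2.aemeasurable ((n : ℝ≥0∞) + 1)⁻¹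
    by_contra htop
    rw [lt_top_iff_ne_top, not_not] at htop
    rw [htop, ENNReal.mul_top (by simp)] at h
    exact (lt_irrefl _ (lt_of_le_of_lt h hx2))
  haveI : SigmaFinite ν := by
    refine ⟨⟨⟨fun n => {i | ((n : ℝ≥0∞) + 1)⁻¹ ≤ (‖x i‖₊ : ℝ≥0∞) ^ 2} ∪ Sᶜ,
      fun _ => trivial, fun n => ?_, ?_⟩⟩⟩
    · calc ν ({i | ((n : ℝ≥0∞) + 1)⁻¹ ≤ (‖x i‖₊ : ℝ≥0∞) ^ 2} ∪ Sᶜ)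
          ≤ ν {i | ((n : ℝ≥0∞) + 1)⁻¹ ≤ (‖x i‖₊ : ℝ≥0∞) ^ 2} + ν Sᶜ := measure_union_le _ _
        _ = ν {i | ((n : ℝ≥0∞) + 1)⁻¹ ≤ (‖x i‖₊ : ℝ≥0∞) ^ 2} := by
            rw [hν, Measure.restrict_apply hS.compl]; simp
        _ ≤ μ {i | ((n : ℝ≥0∞) + 1)⁻¹ ≤ (‖x i‖₊ : ℝ≥0∞) ^ 2} :=
            Measure.restrict_le_self _
        _ < ⊤ := hAfin n
    · refine Set.eq_univ_of_forall fun i => ?_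
      by_cases hx0 : x i = 0
      · exact Set.mem_iUnion.2 ⟨0, Or.inr (by simp [hSdef, hx0])⟩
      · have hv0 : (‖x i‖₊ : ℝ≥0∞) ^ 2 ≠ 0 := by simp [hx0]
        obtain ⟨n, hn⟩ := ENNReal.exists_inv_nat_lt hv0
        refine Set.mem_iUnion.2 ⟨n, Or.inl ?_⟩
        exact le_trans (ENNReal.inv_le_inv' (by simp)) hn.le
  -- lintegrals of functions supported in `S` agree for `μ` and `ν`
  have hrest : ∀ g : ι → ℝ≥0∞,
      ∫⁻ i, (‖x i‖₊ : ℝ≥0∞) ^ 2 * g i ∂μ = ∫⁻ i, (‖x i‖₊ : ℝ≥0∞) ^ 2 * g i ∂ν := by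
    intro g
    have hind : (fun i => (‖x i‖₊ : ℝ≥0∞) ^ 2 * g i)
        = S.indicator (fun i => (‖x i‖₊ : ℝ≥0∞) ^ 2 * g i) := by
      funext i
      by_cases hi : i ∈ S
      · rw [Set.indicator_of_mem hi]
      · rw [Set.indicator_of_notMem hi]
        have hx0 : x i = 0 := not_not.1 hi
        simp [hx0]
    conv_lhs => rw [hind]
    rw [lintegral_indicator hS]
  -- Tonelli
  set I : ℝ≥0∞ := ∫⁻ i, (‖x i‖₊ : ℝ≥0∞) ^ 2 * ENNReal.ofReal (a i ^ (-(2 * α))) ∂μ with hI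
  have hswapmeas : AEMeasurable
      (Function.uncurry fun (t : ℝ) (i : ι) =>
        ENNReal.ofReal (t ^ (2 * α - 1)) *
          ((‖x i‖₊ : ℝ≥0∞) ^ 2 * ENNReal.ofReal (Real.exp (-(2 * t * a i)))))
      ((volume.restrict (Set.Ioi (0 : ℝ))).prod ν) := by
    refine Measurable.aemeasurable ?_
    apply Measurable.fun_mul
    · exact (measurable_fst.pow_const (2 * α - 1)).ennreal_ofReal
    · apply Measurable.fun_mul
      · exact ((hxm.comp measurable_snd).nnnorm.coe_nnreal_ennreal).pow_const 2
      · exact (((measurable_const.mul measurable_fst).mul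
          (hameas.comp measurable_snd)).neg.exp).ennreal_ofReal
  have key : rangeIntegral μ a α x
      = ∫⁻ i, (‖x i‖₊ : ℝ≥0∞) ^ 2 *
          (∫⁻ t in Set.Ioi (0 : ℝ),
            ENNReal.ofReal (t ^ (2 * α - 1)) * ENNReal.ofReal (Real.exp (-(2 * t * a i)))) ∂μ := by
    unfold rangeIntegral heatNormSq
    rw [hrest fun i => ∫⁻ t in Set.Ioi (0 : ℝ),
      ENNReal.ofReal (t ^ (2 * α - 1)) * ENNReal.ofReal (Real.exp (-(2 * t * a i)))]
    rw [lintegral_congr fun t => congrArg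
      (ENNReal.ofReal (t ^ (2 * α - 1)) * ·)
      (hrest fun i => ENNReal.ofReal (Real.exp (-(2 * t * a i))))]
    rw [lintegral_congr fun t =>
      (lintegral_const_mul' (ENNReal.ofReal (t ^ (2 * α - 1))) _ ENNReal.ofReal_ne_top).symm]
    rw [lintegral_lintegral_swap hswapmeas]
    refine lintegral_congr fun i => ?_
    rw [← lintegral_const_mul' ((‖x i‖₊ : ℝ≥0∞) ^ 2) _
      (ENNReal.pow_ne_top ENNReal.coe_ne_top)]
    exact lintegral_congr fun t => by ring
  have key2 : rangeIntegral μ a α x = K * I := by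
    rw [key, hI, ← lintegral_const_mul' K _ hKtop]
    refine lintegral_congr_ae ?_
    filter_upwards [hker] with i hi
    have hpos : 0 < a i := lt_of_le_of_ne (ha0 i) (Ne.symm hi)
    rw [lintegral_heat_kernel hα hpos, hC (a i) hpos]
    ring
  have hiff : rangeIntegral μ a α x < ⊤ ↔ I < ⊤ := by
    rw [key2]
    constructor
    · intro h
      by_contra h'
      rw [lt_top_iff_ne_top, not_not] at h'
      rw [h', ENNReal.mul_top hK0] at h
      exact (lt_irrefl _ h)
    · intro h
      exact ENNReal.mul_lt_top hKtop.lt_top h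
  rw [hiff]
  constructor
  · rintro ⟨y, hy, hxy⟩
    have hyI : I = ∫⁻ i, (‖y i‖₊ : ℝ≥0∞) ^ 2 ∂μ := by
      rw [hI]
      refine lintegral_congr_ae ?_
      filter_upwards [hker, hxy] with i hi hxi
      have hpos : 0 < a i := lt_of_le_of_ne (ha0 i) (Ne.symm hi)
      rw [enorm_sq, enorm_sq, ← ENNReal.ofReal_mul (by positivity)]
      congr 1
      have hnx : ‖x i‖ = a i ^ α * ‖y i‖ := by
        rw [hxi, norm_mul, Complex.norm_real, Real.norm_eq_abs,
          abs_of_nonneg (Real.rpow_nonneg (ha0 i) α)]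
      have h1 : a i ^ α * a i ^ α = a i ^ (2 * α) := by
        rw [← Real.rpow_add hpos]; ring_nf
      have h2 : a i ^ (2 * α) * a i ^ (-(2 * α)) = 1 := by
        rw [← Real.rpow_add hpos]; norm_num
      calc ‖x i‖ ^ 2 * a i ^ (-(2 * α))
          = (a i ^ α * a i ^ α) * a i ^ (-(2 * α)) * ‖y i‖ ^ 2 := by rw [hnx]; ring
        _ = ‖y i‖ ^ 2 := by rw [h1, h2, one_mul]
    rw [hyI]
    exact (memLp_two_iff_lintegral hy.1).1 hy
  · intro hItop
    refine ⟨fun i => ((a i ^ (-α) : ℝ) : ℂ) * x i, ?_, ?_⟩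
    · have hym : Measurable fun i => ((a i ^ (-α) : ℝ) : ℂ) * x i :=
        (Complex.measurable_ofReal.comp (hameas.pow_const (-α))).mul hxm
      refine (memLp_two_iff_lintegral hym.aestronglyMeasurable).2 ?_
      have hpt : ∀ i, (‖((a i ^ (-α) : ℝ) : ℂ) * x i‖₊ : ℝ≥0∞) ^ 2
          = (‖x i‖₊ : ℝ≥0∞) ^ 2 * ENNReal.ofReal (a i ^ (-(2 * α))) := by
        intro i
        rw [enorm_sq, enorm_sq, ← ENNReal.ofReal_mul (by positivity)]
        congr 1
        have hn : ‖((a i ^ (-α) : ℝ) : ℂ) * x i‖ = a i ^ (-α) * ‖x i‖ := by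
          rw [norm_mul, Complex.norm_real, Real.norm_eq_abs,
            abs_of_nonneg (Real.rpow_nonneg (ha0 i) _)]
        have h1 : (a i ^ (-α)) ^ (2 : ℕ) = a i ^ (-(2 * α)) := by
          rw [← Real.rpow_natCast (a i ^ (-α)) 2, ← Real.rpow_mul (ha0 i)]
          congr 1
          push_cast
          ring
        rw [hn, mul_pow, h1]
        ring
      rw [lintegral_congr hpt]
      exact hItop
    · filter_upwards [hker] with i hi
      have hpos : 0 < a i := lt_of_le_of_ne (ha0 i) (Ne.symm hi)
      have h1 : a i ^ α * a i ^ (-α) = 1 := by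
        rw [← Real.rpow_add hpos]; simp
      show x i = ((a i ^ α : ℝ) : ℂ) * (((a i ^ (-α) : ℝ) : ℂ) * x i)
      rw [← mul_assoc, ← Complex.ofReal_mul, h1, Complex.ofReal_one, one_mul]

theorem stmt0 {ι : Type*} [MeasurableSpace ι] (μ : Measure ι)
    (a : ι → ℝ) (hameas : Measurable a) (ha0 : ∀ i, 0 ≤ a i)
    (hker : ∀ᵐ i ∂μ, a i ≠ 0)                      -- `0` is not an eigenvalue of `A`
    (hspec : ∀ ε > (0 : ℝ), μ {i | a i < ε} ≠ 0)   -- `0 ∈ σ(A)`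
    (α : ℝ) (hα : 0 < α) (x : ι → ℂ) (hx : MemLp x 2 μ) :
    (∃ y : ι → ℂ, MemLp y 2 μ ∧ x =ᵐ[μ] fun i => ((a i ^ α : ℝ) : ℂ) * y i)
      ↔ rangeIntegral μ a α x < ⊤ := by
  set x' := hx.1.mk x with hx'def
  have hxx' : x =ᵐ[μ] x' := hx.1.ae_eq_mk
  have hx'm : Measurable x' := hx.1.stronglyMeasurable_mk.measurable
  have hRI : rangeIntegral μ a α x = rangeIntegral μ a α x' := by
    unfold rangeIntegral
    refine lintegral_congr fun t => ?_
    have : heatNormSq μ a x t = heatNormSq μ a x' t := by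
      unfold heatNormSq
      exact lintegral_congr_ae (hxx'.mono fun i hi => by simp only []; rw [hi])
    rw [this]
  have hEx : (∃ y : ι → ℂ, MemLp y 2 μ ∧ x =ᵐ[μ] fun i => ((a i ^ α : ℝ) : ℂ) * y i)
      ↔ (∃ y : ι → ℂ, MemLp y 2 μ ∧ x' =ᵐ[μ] fun i => ((a i ^ α : ℝ) : ℂ) * y i) :=
    exists_congr fun y => and_congr_right fun _ =>
      ⟨fun h => hxx'.symm.trans h, fun h => hxx'.trans h⟩
  rw [hEx, hRI]
  have hx2 : ∫⁻ i, (‖x' i‖₊ : ℝ≥0∞) ^ 2 ∂μ < ⊤ := by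
    rw [← lintegral_congr_ae (hxx'.mono fun i hi => congrArg (fun z : ℂ => (‖z‖₊ : ℝ≥0∞) ^ 2) hi)]
    exact (memLp_two_iff_lintegral hx.1).1 hx
  exact stmt0_measurable μ a hameas ha0 hker α hα x' hx'm hx2
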